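/- Quotients of saturated monoids are saturated: Let G be an abelian group and P ⊆ G a submonoid generating G as a group which is saturated in G (for all g ∈ G and integers n > 0, n • g ∈ P implies g ∈ P). Let Q ⊆ P be a submonoid and H ⊆ G the subgroup generated by Q. Then the image of P under the quotient map G → G ⧸ H is saturated in G ⧸ H: for every x ∈ G ⧸ H and every integer n > 0, if n • x lies in the image of P then x lies in the image of P. -/

import Mathlib

lemma closure_submonoid_mem {G : Type*} [AddCommGroup G] (Q : AddSubmonoid G)
    {h : G} (hh : h ∈ AddSubgroup.closure (Q : Set G)) :
    ∃ a ∈ Q, ∃ b ∈ Q, h = a - b := by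
  induction hh using AddSubgroup.closure_induction with
  | mem x hx => exact ⟨x, hx, 0, Q.zero_mem, by simp⟩
  | zero => exact ⟨0, Q.zero_mem, 0, Q.zero_mem, by simp⟩
  | add x y _ _ ihx ihy =>
    obtain ⟨a, ha, b, hb, rfl⟩ := ihx
    obtain ⟨c, hc, d, hd, rfl⟩ := ihy
    exact ⟨a + c, Q.add_mem ha hc, b + d, Q.add_mem hb hd, by abel⟩
  | neg x _ ihx =>
    obtain ⟨a, ha, b, hb, rfl⟩ := ihx
    exact ⟨b, hb, a, ha, by abel⟩

/-- **Quotients of saturated monoids are saturated.** Let `G` be an abelian group and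
`P ⊆ G` a submonoid generating `G` as a group which is saturated in `G`.  Let `Q ⊆ P` be
a submonoid and `H ⊆ G` the subgroup generated by `Q`.  Then the image of `P` in `G ⧸ H`
is saturated in `G ⧸ H`. -/
theorem saturated_quotient
    (G : Type*) [AddCommGroup G] (P Q : AddSubmonoid G) (hQP : Q ≤ P)
    (hgen : AddSubgroup.closure (P : Set G) = ⊤)
    (hsat : ∀ (g : G) (n : ℕ), 0 < n → n • g ∈ P → g ∈ P) :
    ∀ (x : G ⧸ AddSubgroup.closure (Q : Set G)) (n : ℕ), 0 < n →
      n • x ∈ P.map (QuotientAddGroup.mk' (AddSubgroup.closure (Q : Set G))) →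
      x ∈ P.map (QuotientAddGroup.mk' (AddSubgroup.closure (Q : Set G))) := by
  intro x n hn hx
  induction x using QuotientAddGroup.induction_on with
  | H g =>
    obtain ⟨p, hp, hpx⟩ := hx
    have hx' : (QuotientAddGroup.mk' (AddSubgroup.closure (Q : Set G))) p
        = (QuotientAddGroup.mk' (AddSubgroup.closure (Q : Set G))) (n • g) := by
      simpa using hpx
    have hmem : -p + n • g ∈ AddSubgroup.closure (Q : Set G) :=
      (QuotientAddGroup.mk'_eq_mk' _).mp hx' |>.elim (fun z ⟨hz, hz2⟩ => by
        rw [← hz2]; simpa using hz)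
    obtain ⟨a, ha, b, hb, hab⟩ := closure_submonoid_mem Q hmem
    -- -p + n•g = a - b  ⇒  n•g + b = p + a
    have key : n • g + b = p + a := by
      have := hab
      linear_combination (norm := abel) this
    have hP : n • (g + b) ∈ P := by
      have h1 : n • (g + b) = (n • g + b) + (n - 1) • b := by
        obtain ⟨m, rfl⟩ := Nat.exists_eq_add_of_lt hn
        simp [add_smul, smul_add, succ_nsmul]
        abel
      rw [h1, key]
      exact P.add_mem (P.add_mem hp (hQP ha)) (AddSubmonoid.nsmul_mem P (hQP hb) _)
    have hgb : g + b ∈ P := hsat _ n hn hP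
    refine ⟨g + b, hgb, ?_⟩
    have hbH : b ∈ AddSubgroup.closure (Q : Set G) := AddSubgroup.subset_closure hb
    simp only [QuotientAddGroup.mk'_apply]
    rw [QuotientAddGroup.eq_iff_sub_mem]
    simpa using hbH
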